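/- For x, h, H, ν > 0 and ρ = λ/μ, with tan Θᵀ_{x,h} distributed with density f(t) = (ρ/t²)·exp(−μh − e^{−μh}ρ(1/t − x/h)) on (0, h/x], the conditional coverage probability τ_H(x,h) = 1 − ∫₀^{h/x} exp(−νH(1/t − x/h))·f(t) dt equals 1 − ρ/(e^{μh}Hν + ρ). -/

import Mathlib

open MeasureTheory Real Set

/-- the conditional coverage probability
τ_H(x,h) = 1 − ∫₀^{h/x} exp(−νH(1/t − x/h)) f(t) dt with
f(t) = (ρ/t²)·exp(−μh − e^{−μh}ρ(1/t − x/h)) on (0, h/x] equals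
1 − ρ/(e^{μh}Hν + ρ). -/
theorem conditional_coverage_probability
    (lam mu x h H nu : ℝ) (hlam : 0 < lam) (hmu : 0 < mu) (hx : 0 < x)
    (hh : 0 < h) (hH : 0 < H) (hnu : 0 < nu)
    (rho : ℝ) (hrho : rho = lam / mu) :
    1 - ∫ t in Set.Ioo 0 (h / x),
        Real.exp (-(nu * H) * (1 / t - x / h)) * ((rho / t ^ 2) *
          Real.exp (-(mu * h) - Real.exp (-(mu * h)) * rho * (1 / t - x / h)))
      = 1 - rho / (Real.exp (mu * h) * H * nu + rho) := by
  have hrho' : 0 < rho := by rw [hrho]; positivity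
  set c : ℝ := nu * H + Real.exp (-(mu * h)) * rho with hc
  have hcpos : 0 < c := by positivity
  set f : ℝ → ℝ := fun t => t⁻¹ - x / h with hf
  set f' : ℝ → ℝ := fun t => -(t ^ 2)⁻¹ with hf'
  have hxh : 0 < h / x := by positivity
  have hderiv : ∀ t ∈ Set.Ioo 0 (h / x),
      HasDerivWithinAt f (f' t) (Set.Ioo 0 (h / x)) t := by
    intro t ht
    exact ((hasDerivAt_inv ht.1.ne').sub_const _).hasDerivWithinAt
  have hinj : Set.InjOn f (Set.Ioo 0 (h / x)) := by
    intro a _ b _ hab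
    have : a⁻¹ = b⁻¹ := by
      have := sub_left_inj.mp hab
      exact this
    exact inv_injective this
  have himg : f '' Set.Ioo 0 (h / x) = Set.Ioi 0 := by
    ext u
    constructor
    · rintro ⟨t, ⟨ht0, htb⟩, rfl⟩
      have h1 : (h / x)⁻¹ < t⁻¹ := by
        exact inv_strictAnti₀ ht0 htb
      have h2 : (h / x)⁻¹ = x / h := by
        rw [inv_div]
      simp only [f, Set.mem_Ioi]
      rw [h2] at h1
      linarith
    · intro hu
      have hu' : (0 : ℝ) < u := hu
      have hden : 0 < u + x / h := by positivity
      refine ⟨(u + x / h)⁻¹, ⟨by positivity, ?_⟩, ?_⟩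
      · have h1 : x / h < u + x / h := by linarith
        have h2 : (u + x / h)⁻¹ < (x / h)⁻¹ :=
          inv_strictAnti₀ (by positivity) h1
        rwa [inv_div] at h2
      · simp only [f, inv_inv]
        ring
  have key : ∫ u in Set.Ioi (0 : ℝ),
      rho * Real.exp (-(mu * h)) * Real.exp (-(c * u))
      = ∫ t in Set.Ioo 0 (h / x),
        |f' t| • (rho * Real.exp (-(mu * h)) * Real.exp (-(c * f t))) := by
    rw [← himg]
    exact integral_image_eq_integral_abs_deriv_smul measurableSet_Ioo hderiv hinj _
  have hleft : ∫ u in Set.Ioi (0 : ℝ),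
      rho * Real.exp (-(mu * h)) * Real.exp (-(c * u))
      = rho * Real.exp (-(mu * h)) * c⁻¹ := by
    rw [MeasureTheory.integral_const_mul]
    have : ∫ u in Set.Ioi (0 : ℝ), Real.exp (-(c * u)) = c⁻¹ := by
      rw [integral_comp_mul_left_Ioi (fun v => Real.exp (-v)) 0 hcpos, mul_zero,
        integral_exp_neg_Ioi, neg_zero, Real.exp_zero, smul_eq_mul, mul_one]
    rw [this]
  have hright : ∫ t in Set.Ioo 0 (h / x),
        |f' t| • (rho * Real.exp (-(mu * h)) * Real.exp (-(c * f t)))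
      = ∫ t in Set.Ioo 0 (h / x),
        Real.exp (-(nu * H) * (1 / t - x / h)) * ((rho / t ^ 2) *
          Real.exp (-(mu * h) - Real.exp (-(mu * h)) * rho * (1 / t - x / h))) := by
    apply MeasureTheory.setIntegral_congr_fun measurableSet_Ioo
    intro t ht
    have ht0 : 0 < t := ht.1
    have e1 : Real.exp (-(mu * h)) * Real.exp (-(c * (t⁻¹ - x / h)))
        = Real.exp (-(nu * H) * (t⁻¹ - x / h)) *
          Real.exp (-(mu * h) - Real.exp (-(mu * h)) * rho * (t⁻¹ - x / h)) := by
      rw [← Real.exp_add, ← Real.exp_add]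
      congr 1
      simp only [hc]
      ring
    simp only [f, f', abs_neg, abs_inv, abs_of_nonneg (sq_nonneg t), smul_eq_mul, one_div]
    linear_combination (rho / t ^ 2) * e1
  have hint : ∫ t in Set.Ioo 0 (h / x),
        Real.exp (-(nu * H) * (1 / t - x / h)) * ((rho / t ^ 2) *
          Real.exp (-(mu * h) - Real.exp (-(mu * h)) * rho * (1 / t - x / h)))
      = rho * Real.exp (-(mu * h)) * c⁻¹ := by
    rw [← hright, ← key, hleft]
  rw [hint]
  congr 1
  have he : Real.exp (mu * h) * Real.exp (-(mu * h)) = 1 := by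
    rw [← Real.exp_add]; ring_nf; exact Real.exp_zero
  have hden : Real.exp (mu * h) * H * nu + rho ≠ 0 := by positivity
  field_simp [hc]
  linear_combination (H * nu) * he
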